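/- Let m ≥ 2 be an integer and t, L₁, L₂, ε positive reals with L₁ ≥ L₂ and ε ≤ m·t·L₂. Set X = 4·e·m·t·L₂/ε, let k = max(1, round(√((1/2)·log_{25/3} X))), and set d_k = m·(4/3)·k·(5/3)^{k−1}. Then (2m−1)·5^{k−1}·L₁·t·X^{1/(2k)}·(4·m·e/3)·(5/3)^{k−1} ≤ (8/3)·(2m−1)·m·e·t·L₁·exp(2·√((1/2)·ln(25/3)·ln X)). -/

import Mathlib

set_option maxHeartbeats 1000000 in
/-- The paper's bound on the number of exponentials: with
`X = 4emtL₂/ε`, `k = max(1, round(√((1/2)·log_{25/3} X)))` and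
`d_k = m·(4/3)·k·(5/3)^{k−1}`, the general upper bound on `N_exp` is at most
`(8/3)(2m−1)m·e·t·L₁·exp(2√((1/2)·ln(25/3)·ln X))`. -/
theorem nexp_bound (m : ℕ) (hm : 2 ≤ m) (t L1 L2 ε : ℝ)
    (ht : 0 < t) (hL1 : 0 < L1) (hL2 : 0 < L2) (hε : 0 < ε)
    (hL12 : L2 ≤ L1) (hεle : ε ≤ (m : ℝ) * t * L2)
    (X : ℝ) (hX : X = 4 * Real.exp 1 * m * t * L2 / ε)
    (k : ℕ) (hk : k = max 1 (round (Real.sqrt ((1 / 2) * Real.logb (25 / 3) X))).toNat)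
    (dk : ℝ) (hdk : dk = (m : ℝ) * (4 / 3) * k * (5 / 3) ^ (k - 1)) :
    ((2 * m - 1 : ℝ)) * 5 ^ (k - 1) * L1 * t * X ^ ((1 : ℝ) / (2 * k)) *
        (4 * m * Real.exp 1 / 3) * (5 / 3) ^ (k - 1)
      ≤ (8 / 3) * (2 * m - 1 : ℝ) * m * Real.exp 1 * t * L1 *
        Real.exp (2 * Real.sqrt ((1 / 2) * Real.log (25 / 3) * Real.log X)) := by
  have e1 : (0:ℝ) < Real.exp 1 := Real.exp_pos 1
  have he1 : (1:ℝ) ≤ Real.exp 1 := Real.one_le_exp (by norm_num)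
  have hm' : (2:ℝ) ≤ (m:ℝ) := by exact_mod_cast hm
  have hm0 : (0:ℝ) < m := by linarith
  have hmtL2 : (0:ℝ) < (m:ℝ) * t * L2 := by positivity
  have hX1 : (1:ℝ) ≤ X := by
    rw [hX, le_div_iff₀ hε, one_mul]
    nlinarith
  have hX0 : (0:ℝ) < X := by linarith
  set L : ℝ := Real.log X with hLdef
  have hL : 0 ≤ L := Real.log_nonneg hX1
  set a : ℝ := Real.log (25/3) with hadef
  have ha : 0 < a := Real.log_pos (by norm_num)
  set s : ℝ := Real.sqrt (L / (2*a)) with hsdef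
  have hs0 : 0 ≤ s := Real.sqrt_nonneg _
  have hs2 : s ^ 2 = L / (2*a) := Real.sq_sqrt (by positivity)
  have hLval : L = 2 * a * s ^ 2 := by
    rw [hs2]; field_simp
  -- identify the rounding argument with s
  have harg : Real.sqrt ((1 / 2) * Real.logb (25 / 3) X) = s := by
    rw [hsdef]
    congr 1
    rw [Real.logb, ← hadef, ← hLdef]
    ring
  rw [harg] at hk
  have hk1 : 1 ≤ k := by rw [hk]; exact le_max_left _ _
  have hk0 : (0:ℝ) < (k:ℝ) := by exact_mod_cast hk1
  -- |k - s|² ≤ k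
  have hround := abs_sub_round s
  have hks : ((k:ℝ) - s) ^ 2 ≤ (k:ℝ) := by
    have habs : |s - (round s : ℝ)| ≤ 1/2 := hround
    rcases le_or_gt 1 (round s) with hr | hr
    · have hkr : k = (round s).toNat := by
        rw [hk]
        have : 1 ≤ (round s).toNat := by omega
        omega
      have hcast : ((k:ℝ)) = ((round s : ℤ) : ℝ) := by
        have h0 : ((round s).toNat : ℤ) = round s := Int.toNat_of_nonneg (by omega)
        rw [hkr]; exact_mod_cast h0
      rw [hcast]
      have h1 : (1:ℝ) ≤ ((round s : ℤ) : ℝ) := by exact_mod_cast hr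
      have := abs_le.mp habs
      nlinarith
    · -- round s ≤ 0, so s ≤ 1/2 and k = 1
      have hr0 : (round s : ℝ) ≤ 0 := by exact_mod_cast (by omega : round s ≤ 0)
      have hsle : s ≤ 1/2 := by
        have := abs_le.mp habs
        linarith
      have hkr : k = 1 := by rw [hk]; omega
      rw [hkr]
      push_cast
      nlinarith
  -- key exponent inequality
  have hq : ((k:ℝ) - 1) + s^2 / k ≤ 2 * s := by
    have hrw : ((k:ℝ) - 1) + s^2 / k - 2 * s = (((k:ℝ) - s)^2 - k) / k := by
      field_simp; ring
    have : (((k:ℝ) - s)^2 - k) / k ≤ 0 :=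
      div_nonpos_of_nonpos_of_nonneg (by linarith) hk0.le
    linarith
  have hln2 : 0 < Real.log 2 := Real.log_pos one_lt_two
  have key : (((k:ℝ) - 1)) * a + L / (2 * k) ≤ Real.log 2 + 2 * (a * s) := by
    have hdiv : L / (2 * k) = a * (s^2 / k) := by
      rw [hLval]; field_simp
    rw [hdiv]
    have : ((k:ℝ) - 1) * a + a * (s^2 / k) = a * (((k:ℝ) - 1) + s^2 / k) := by ring
    rw [this]
    have h2 : a * (((k:ℝ) - 1) + s^2 / k) ≤ a * (2 * s) :=
      mul_le_mul_of_nonneg_left hq ha.le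
    have h3 : a * (2 * s) = 2 * (a * s) := by ring
    linarith
  -- rewrite pieces
  have hcastk : ((k - 1 : ℕ) : ℝ) = (k:ℝ) - 1 := by
    have : (1:ℕ) ≤ k := hk1
    push_cast [Nat.cast_sub this]
    ring
  have hpow : (5:ℝ) ^ (k-1) * (5/3:ℝ) ^ (k-1) = Real.exp ((((k:ℝ)) - 1) * a) := by
    rw [← mul_pow]
    have h253 : (5:ℝ) * (5/3) = 25/3 := by norm_num
    rw [h253]
    rw [show (25/3:ℝ) = Real.exp a from (Real.exp_log (by norm_num)).symm]
    rw [← Real.exp_nat_mul, hcastk]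
  have hrpow : X ^ ((1 : ℝ) / (2 * (k:ℝ))) = Real.exp (L / (2 * k)) := by
    rw [Real.rpow_def_of_pos hX0, ← hLdef]
    congr 1
    field_simp
  have hsqrt : Real.sqrt ((1 / 2) * a * L) = a * s := by
    have h2a : (2*a) ≠ 0 := by positivity
    have h1 : (1/2) * a * L = a^2 * (L / (2*a)) := by
      rw [← mul_div_assoc, eq_div_iff h2a]; ring
    rw [h1, Real.sqrt_mul (sq_nonneg a), Real.sqrt_sq ha.le, hsdef]
  rw [hsqrt]
  -- constants
  set C : ℝ := (4/3) * (2 * (m:ℝ) - 1) * m * Real.exp 1 * t * L1 with hC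
  have hC0 : 0 < C := by
    have : (0:ℝ) < 2 * (m:ℝ) - 1 := by linarith
    positivity
  have lhs_eq : ((2 * (m:ℝ) - 1)) * 5 ^ (k - 1) * L1 * t * X ^ ((1 : ℝ) / (2 * (k:ℝ))) *
      (4 * (m:ℝ) * Real.exp 1 / 3) * (5 / 3) ^ (k - 1)
      = C * Real.exp ((((k:ℝ)) - 1) * a + L / (2 * k)) := by
    rw [Real.exp_add, ← hpow, ← hrpow, hC]
    ring
  have rhs_eq : (8 / 3) * (2 * (m:ℝ) - 1) * m * Real.exp 1 * t * L1 *
      Real.exp (2 * (a * s)) = C * Real.exp (Real.log 2 + 2 * (a * s)) := by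
    rw [Real.exp_add, Real.exp_log (by norm_num : (0:ℝ) < 2), hC]
    ring
  rw [lhs_eq, rhs_eq]
  exact mul_le_mul_of_nonneg_left (Real.exp_le_exp.mpr key) hC0.le
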